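/- Let D=(V,A) be a digraph with minimum dicut size τ and let G⃗ be the digraph on arc set A ∪ A⁻¹ with weight w^D giving weight τ to arcs of A and 1 to arcs of A⁻¹. For any integer k ≤ τ, D contains k pairwise arc-disjoint dijoins if and only if there exist k strongly connected spanning subdigraphs F₁,…,F_k of G⃗ such that each arc e of G⃗ is used by at most w^D(e) of the F_i. -/

import Mathlib

open Finset

variable {V A : Type*} [Fintype V] [DecidableEq V] [Fintype A] [DecidableEq A]

/-- The arcs leaving the vertex set `U`. -/
def outArcs (src tgt : A → V) (U : Finset V) : Finset A :=
  univ.filter fun a => src a ∈ U ∧ tgt a ∉ U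

/-- The arcs entering the vertex set `U`. -/
def inArcs (src tgt : A → V) (U : Finset V) : Finset A :=
  univ.filter fun a => tgt a ∈ U ∧ src a ∉ U

/-- `U` induces a dicut: nonempty, proper, no entering arcs (the dicut is `outArcs U`). -/
def IsDicut (src tgt : A → V) (U : Finset V) : Prop :=
  U.Nonempty ∧ U ≠ univ ∧ inArcs src tgt U = ∅

/-- A dijoin: an arc set meeting every dicut. -/
def IsDijoin (src tgt : A → V) (J : Finset A) : Prop :=
  ∀ U : Finset V, IsDicut src tgt U → (outArcs src tgt U ∩ J).Nonempty

/-- Tail of an arc under the orientation `o` of the underlying undirected graph. -/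
def otail (src tgt : A → V) (o : A → Bool) (a : A) : V := if o a then src a else tgt a

/-- Head of an arc under the orientation `o` of the underlying undirected graph. -/
def ohead (src tgt : A → V) (o : A → Bool) (a : A) : V := if o a then tgt a else src a

/-- The underlying undirected graph admits a nowhere-zero circular `k`-flow: an orientation
`o` of the edges together with a circulation `f` with `1 ≤ f_e ≤ k - 1` everywhere. -/
def HasNZCircularFlow (src tgt : A → V) (k : ℚ) : Prop :=
  ∃ (o : A → Bool) (f : A → ℚ),
    (∀ v : V, ∑ a ∈ univ.filter (fun a => otail src tgt o a = v), f a
            = ∑ a ∈ univ.filter (fun a => ohead src tgt o a = v), f a) ∧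
    ∀ a : A, 1 ≤ f a ∧ f a ≤ k - 1

/-- Source of an arc in the augmented digraph `A × Bool` (`true` = original copy,
`false` = reversed copy). -/
def asrc (src tgt : A → V) (p : A × Bool) : V := if p.2 then src p.1 else tgt p.1

/-- Target of an arc in the augmented digraph. -/
def atgt (src tgt : A → V) (p : A × Bool) : V := if p.2 then tgt p.1 else src p.1

/-- `D` contains `k` pairwise disjoint dijoins iff the augmented digraph with weights
(`τ` on original arcs, `1` on reverse arcs) packs `k` strongly connected spanning subdigraphs. -/
theorem dijoins_iff_scd_packing (src tgt : A → V) (τ k : ℕ) (hk : k ≤ τ)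
    (hmin : ∀ U : Finset V, IsDicut src tgt U → τ ≤ (outArcs src tgt U).card) :
    (∃ J : Fin k → Finset A,
      (∀ i j, i ≠ j → Disjoint (J i) (J j)) ∧ ∀ i, IsDijoin src tgt (J i))
    ↔
    (∃ F : Fin k → Finset (A × Bool),
      (∀ i, ∀ U : Finset V, U.Nonempty → U ≠ univ →
        (outArcs (asrc src tgt) (atgt src tgt) U ∩ F i).Nonempty) ∧
      (∀ p : A × Bool, (univ.filter fun i => p ∈ F i).card ≤ if p.2 then τ else 1)) := by
  constructor
  · rintro ⟨J, hdisj, hdij⟩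
    refine ⟨fun i => univ.filter (fun p => p.2 = true ∨ p.1 ∈ J i), ?_, ?_⟩
    · intro i U hU hUu
      by_cases h : (outArcs src tgt U).Nonempty
      · obtain ⟨a, ha⟩ := h
        simp only [outArcs, mem_filter, mem_univ, true_and] at ha
        exact ⟨(a, true), by rw [mem_inter, outArcs, mem_filter]; simp [asrc, atgt, ha.1, ha.2]⟩
      · have hdc : IsDicut src tgt Uᶜ := by
          refine ⟨nonempty_iff_ne_empty.mpr (fun hc => hUu ((compl_eq_empty_iff U).mp hc)), ?_, ?_⟩
          · intro hc
            rw [compl_eq_univ_iff] at hc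
            exact hU.ne_empty hc
          · rw [eq_empty_iff_forall_notMem]
            intro a ha
            simp only [inArcs, mem_filter, mem_univ, true_and, mem_compl, not_not] at ha
            exact h ⟨a, by simp [outArcs, ha.2, ha.1]⟩
        obtain ⟨a, ha⟩ := hdij i Uᶜ hdc
        simp only [mem_inter, outArcs, mem_filter, mem_univ, true_and, mem_compl,
          not_not] at ha
        exact ⟨(a, false), by rw [mem_inter, outArcs, mem_filter]; simp [asrc, atgt, ha.1.1, ha.1.2, ha.2]⟩
    · intro p
      by_cases hp : p.2 = true
      · simp only [hp, if_true]
        exact le_trans (card_filter_le _ _) (by simpa using hk)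
      · simp only [hp, if_false]
        refine card_le_one.mpr ?_
        intro i hi j hj
        have hp' : p.2 = false := by simpa using hp
        simp only [mem_filter, mem_univ, true_and, hp', false_or] at hi hj
        simp only [Bool.false_eq_true, false_or] at hi hj
        by_contra hij
        exact (disjoint_left.mp (hdisj i j hij)) hi hj
  · rintro ⟨F, hsc, hw⟩
    refine ⟨fun i => univ.filter (fun a => (a, false) ∈ F i), ?_, ?_⟩
    · intro i j hij
      rw [disjoint_left]
      intro a hai haj
      simp only [mem_filter, mem_univ, true_and] at hai haj
      have h1 := hw (a, false)
      simp only [if_neg (by simp : ¬ ((a, false) : A × Bool).2 = true)] at h1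
      exact hij (card_le_one.mp h1 i (by simpa using hai) j (by simpa using haj))
    · intro i U hdc
      have hne := hdc.1
      have hnu := hdc.2.1
      have hin := hdc.2.2
      have h1 : (Uᶜ).Nonempty := nonempty_iff_ne_empty.mpr (fun hc => hnu ((compl_eq_empty_iff U).mp hc))
      have h2 : Uᶜ ≠ univ := by
        intro hc
        rw [compl_eq_univ_iff] at hc
        exact hne.ne_empty hc
      obtain ⟨p, hp⟩ := hsc i Uᶜ h1 h2
      obtain ⟨a, b⟩ := p
      simp only [mem_inter, outArcs, mem_filter, mem_univ, true_and, mem_compl,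
        not_not] at hp
      cases b with
      | true =>
        exfalso
        have : a ∈ inArcs src tgt U := by
          simp [asrc, atgt] at hp
          simp [inArcs, hp.1.2, hp.1.1]
        rw [hin] at this
        exact notMem_empty a this
      | false =>
        simp [asrc, atgt] at hp
        exact ⟨a, by simp [outArcs, hp.1.2, hp.1.1, hp.2]⟩
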